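/- Let X₁, …, Xₙ be i.i.d. real-valued random variables with common distribution D having CDF F, let α ∈ (0,1), β ∈ (0,1), and t > 0 be such that α − F(q_α − t) > 0, where q_α := inf{x : F(x) ≥ α}. Define the empirical quantile q̂_α := inf{x : #{i : Xᵢ ≤ x} ≥ α·n}. If n ≥ (1/(2·(α − F(q_α − t))²))·log(1/β), then Pr( q̂_α < q_α − t ) ≤ β. -/

import Mathlib

open MeasureTheory ProbabilityTheory

/-- The CDF of a distribution `D` on `ℝ`. -/
noncomputable def distCdf (D : Measure ℝ) (x : ℝ) : ℝ := (D (Set.Iic x)).toReal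

/-- The population `τ`-quantile `q_τ := inf {x : F(x) ≥ τ}`. -/
noncomputable def popQuantile (D : Measure ℝ) (τ : ℝ) : ℝ :=
  sInf {x : ℝ | τ ≤ distCdf D x}

/-- The empirical `γ`-quantile `q̂_γ := inf {x : #{i : Xᵢ ≤ x} ≥ γ·n}`. -/
noncomputable def empQuantile {n : ℕ} (X : Fin n → ℝ) (γ : ℝ) : ℝ :=
  sInf {x : ℝ | γ * (n : ℝ) ≤ ((Finset.univ.filter (fun i => X i ≤ x)).card : ℝ)}

/-- Hoeffding's lemma, Bernoulli case: `1 - q + q e^λ ≤ exp(λq + λ²/8)`. -/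
lemma bernoulli_mgf_bound (q : ℝ) (hq0 : 0 ≤ q) (hq1 : q < 1) (l : ℝ) (hl : 0 ≤ l) :
    1 - q + q * Real.exp l ≤ Real.exp (l * q + l ^ 2 / 8) := by
  set d : ℝ → ℝ := fun x => 1 - q + q * Real.exp x with hd_def
  have hd_pos : ∀ x, 0 < d x := fun x => by
    have := Real.exp_pos x
    have : 0 ≤ q * Real.exp x := mul_nonneg hq0 (le_of_lt this)
    simp only [hd_def]; linarith
  have hd : ∀ x, HasDerivAt d (q * Real.exp x) x := fun x => by
    exact ((Real.hasDerivAt_exp x).const_mul q).const_add (1 - q)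
  -- ψ x = g'(x) - q - x/4 where g = log ∘ d
  set ψ : ℝ → ℝ := fun x => q * Real.exp x / d x - q - x / 4 with hψ_def
  have hψ : ∀ x, HasDerivAt ψ (q * Real.exp x * (1 - q) / (d x) ^ 2 - 1 / 4) x := by
    intro x
    have h1 : HasDerivAt (fun x => q * Real.exp x) (q * Real.exp x) x :=
      (Real.hasDerivAt_exp x).const_mul q
    have h2 : HasDerivAt (fun x => q * Real.exp x / d x)
        ((q * Real.exp x * d x - q * Real.exp x * (q * Real.exp x)) / (d x) ^ 2) x :=
      h1.div (hd x) (ne_of_gt (hd_pos x))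
    have h3 : HasDerivAt (fun x : ℝ => x / 4) (1 / 4) x := by
      simpa using (hasDerivAt_id x).div_const 4
    have := (h2.sub_const q).sub h3
    refine this.congr_deriv ?_
    have : q * Real.exp x * d x - q * Real.exp x * (q * Real.exp x)
        = q * Real.exp x * (1 - q) := by simp only [hd_def]; ring
    rw [this]
  have hψ_deriv_nonpos : ∀ x, q * Real.exp x * (1 - q) * (4:ℝ) ≤ (d x) ^ 2 := by
    intro x
    have hu : 0 ≤ q * Real.exp x := mul_nonneg hq0 (Real.exp_pos x).le
    have : d x = (1 - q) + q * Real.exp x := by simp [hd_def]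
    nlinarith [sq_nonneg (q * Real.exp x - (1 - q))]
  have hψ_anti : Antitone ψ := by
    apply antitone_of_deriv_nonpos
    · exact fun x => (hψ x).differentiableAt
    · intro x
      rw [(hψ x).deriv]
      have h4 : (0:ℝ) < (d x) ^ 2 := pow_pos (hd_pos x) 2
      rw [sub_nonpos, div_le_div_iff₀ h4 (by norm_num)]
      linarith [hψ_deriv_nonpos x]
  have hψ0 : ψ 0 = 0 := by
    simp only [hψ_def, hd_def, Real.exp_zero, mul_one]
    field_simp
    ring
  have hψ_nonpos : ∀ x ∈ Set.Ici (0:ℝ), ψ x ≤ 0 := fun x hx =>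
    hψ0 ▸ hψ_anti hx
  -- φ x = log (d x) - q x - x²/8
  set φ : ℝ → ℝ := fun x => Real.log (d x) - q * x - x ^ 2 / 8 with hφ_def
  have hφ : ∀ x, HasDerivAt φ (ψ x) x := by
    intro x
    have h1 : HasDerivAt (fun x => Real.log (d x)) (q * Real.exp x / d x) x :=
      (hd x).log (ne_of_gt (hd_pos x))
    have h2 : HasDerivAt (fun x : ℝ => q * x) q x := by
      simpa using (hasDerivAt_id x).const_mul q
    have h3 : HasDerivAt (fun x : ℝ => x ^ 2 / 8) (2 * x / 8) x := by
      simpa using (hasDerivAt_pow 2 x).div_const 8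
    have := (h1.sub h2).sub h3
    refine this.congr_deriv ?_
    simp only [hψ_def]; ring
  have hφ_anti : AntitoneOn φ (Set.Ici 0) := by
    apply antitoneOn_of_deriv_nonpos (convex_Ici 0)
    · exact fun x _ => ((hφ x).differentiableAt.continuousAt).continuousWithinAt
    · exact fun x _ => (hφ x).differentiableAt.differentiableWithinAt
    · intro x hx
      rw [(hφ x).deriv]
      exact hψ_nonpos x (le_of_lt (by simpa using hx))
  have hφ0 : φ 0 = 0 := by simp [hφ_def, hd_def]
  have hφl : φ l ≤ 0 := hφ0 ▸ hφ_anti (Set.self_mem_Ici) hl hl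
  have hlog : Real.log (d l) ≤ l * q + l ^ 2 / 8 := by
    simp only [hφ_def] at hφl; nlinarith
  calc d l = Real.exp (Real.log (d l)) := (Real.exp_log (hd_pos l)).symm
    _ ≤ Real.exp (l * q + l ^ 2 / 8) := Real.exp_le_exp.mpr hlog

/-- For i.i.d. samples from `D` with CDF `F`, if
`α − F(q_α − t) > 0` and `n ≥ (1/(2(α − F(q_α−t))²))·log(1/β)`, then the
empirical `α`-quantile falls below `q_α − t` with probability at most `β`. -/
theorem empirical_quantile_lower_additive
    {Ω : Type*} [MeasurableSpace Ω] (μ : Measure Ω) [IsProbabilityMeasure μ]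
    (n : ℕ) (X : Fin n → Ω → ℝ) (hmeas : ∀ i, Measurable (X i))
    (D : Measure ℝ) [IsProbabilityMeasure D]
    (hindep : iIndepFun X μ)
    (hid : ∀ i, Measure.map (X i) μ = D)
    (α β t : ℝ) (hα : α ∈ Set.Ioo (0 : ℝ) 1) (hβ : β ∈ Set.Ioo (0 : ℝ) 1)
    (ht : 0 < t) (hF : 0 < α - distCdf D (popQuantile D α - t))
    (hn : (n : ℝ) ≥ (1 / (2 * (α - distCdf D (popQuantile D α - t)) ^ 2))
            * Real.log (1 / β)) :
    μ {ω | empQuantile (fun i => X i ω) α < popQuantile D α - t}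
      ≤ ENNReal.ofReal β := by
  obtain ⟨hα0, hα1⟩ := hα
  obtain ⟨hβ0, hβ1⟩ := hβ
  set s : ℝ := popQuantile D α - t with hs_def
  set q : ℝ := distCdf D s with hq_def
  set p : ℝ := α - q with hp_def
  have hp_pos : 0 < p := hF
  have hq0 : 0 ≤ q := ENNReal.toReal_nonneg
  have hq1 : q < 1 := by linarith
  have hlogβ : 0 < Real.log (1 / β) := by
    rw [one_div, Real.log_inv]
    linarith [Real.log_neg hβ0 hβ1]
  -- n ≥ 1
  have hn1 : 1 ≤ n := by
    by_contra h
    push_neg at h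
    interval_cases n
    simp only [Nat.cast_zero, ge_iff_le] at hn
    have : 0 < 1 / (2 * p ^ 2) * Real.log (1 / β) :=
      mul_pos (by positivity) hlogβ
    linarith
  have hne : (Finset.univ : Finset (Fin n)).Nonempty :=
    Finset.univ_nonempty_iff.mpr (Fin.pos_iff_nonempty.mp hn1)
  have hn_pos : (0:ℝ) < n := by exact_mod_cast hn1
  -- the indicator variables
  set g : ℝ → ℝ := fun x => if x ≤ s then 1 else 0 with hg_def
  have hg_meas : Measurable g := by
    apply Measurable.ite measurableSet_Iic <;> exact measurable_const
  set Z : Fin n → Ω → ℝ := fun i ω => g (X i ω) with hZ_def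
  have hZ_meas : ∀ i, Measurable (Z i) := fun i => hg_meas.comp (hmeas i)
  have hZ_indep : iIndepFun Z μ :=
    hindep.comp (fun _ => g) (fun _ => hg_meas)
  -- event inclusion
  have hincl : {ω | empQuantile (fun i => X i ω) α < s}
      ⊆ {ω | α * (n:ℝ) ≤ (∑ i, Z i) ω} := by
    intro ω hω
    simp only [Set.mem_setOf_eq, empQuantile] at hω ⊢
    set T : Set ℝ := {x : ℝ | α * (n : ℝ)
        ≤ ((Finset.univ.filter (fun i => X i ω ≤ x)).card : ℝ)} with hT_def
    have hT_ne : T.Nonempty := by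
      refine ⟨(Finset.univ.sup' hne (fun i => X i ω) : ℝ), ?_⟩
      have : Finset.univ.filter (fun i => X i ω ≤ Finset.univ.sup' hne (fun i => X i ω))
          = Finset.univ := by
        apply Finset.filter_true_of_mem
        intro i _
        exact Finset.le_sup' (fun i => X i ω) (Finset.mem_univ i)
      simp only [hT_def, Set.mem_setOf_eq, this, Finset.card_univ, Fintype.card_fin]
      nlinarith
    have hT_bdd : BddBelow T := by
      refine ⟨Finset.univ.inf' hne (fun i => X i ω), ?_⟩
      intro y hy
      simp only [hT_def, Set.mem_setOf_eq] at hy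
      have hcard : (Finset.univ.filter (fun i => X i ω ≤ y)).Nonempty := by
        rw [Finset.nonempty_iff_ne_empty]
        intro h
        rw [h] at hy
        simp only [Finset.card_empty, Nat.cast_zero] at hy
        nlinarith
      obtain ⟨i, hi⟩ := hcard
      rw [Finset.mem_filter] at hi
      exact le_trans (Finset.inf'_le _ (Finset.mem_univ i)) hi.2
    obtain ⟨x, hxT, hxs⟩ := (csInf_lt_iff hT_bdd hT_ne).mp hω
    simp only [hT_def, Set.mem_setOf_eq] at hxT
    have hsub : Finset.univ.filter (fun i => X i ω ≤ x)
        ⊆ Finset.univ.filter (fun i => X i ω ≤ s) := by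
      intro i hi
      simp only [Finset.mem_filter, Finset.mem_univ, true_and] at hi ⊢
      exact le_trans hi hxs.le
    have hcard_le := Finset.card_le_card hsub
    have hsum : (∑ i, Z i) ω
        = ((Finset.univ.filter (fun i => X i ω ≤ s)).card : ℝ) := by
      rw [Finset.sum_apply]
      simp only [hZ_def, hg_def]
      rw [Finset.sum_boole]
    rw [hsum]
    calc α * (n:ℝ) ≤ _ := hxT
      _ ≤ _ := by exact_mod_cast hcard_le
  refine le_trans (measure_mono hincl) ?_
  -- Chernoff bound
  set l : ℝ := 4 * p with hl_def
  have hl_pos : 0 < l := by positivity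
  -- each mgf
  have hmgf_i : ∀ i, mgf (Z i) μ l = 1 - q + q * Real.exp l := by
    intro i
    have hmap : mgf (Z i) μ l = ∫ x, Real.exp (l * g x) ∂D := by
      rw [mgf, ← hid i, integral_map (hmeas i).aemeasurable]
      exact ((hg_meas.const_mul l).exp).aestronglyMeasurable
    rw [hmap]
    have heq : (fun x => Real.exp (l * g x))
        = fun x => 1 + Set.indicator (Set.Iic s) (fun _ => Real.exp l - 1) x := by
      funext x
      simp only [hg_def, Set.indicator, Set.mem_Iic]
      by_cases hx : x ≤ s <;> simp [hx]
    rw [heq, integral_add (integrable_const 1)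
      ((integrable_const (Real.exp l - 1)).indicator measurableSet_Iic), integral_const,
      integral_indicator_const _ measurableSet_Iic]
    simp only [Measure.real, measure_univ, ENNReal.toReal_one, smul_eq_mul, one_mul]
    simp only [hq_def, distCdf]
    ring
  -- integrability of each exp(l * Z i)
  have hint_i : ∀ i ∈ Finset.univ, Integrable (fun ω => Real.exp (l * Z i ω)) μ := by
    intro i _
    refine Integrable.mono' (integrable_const (max (Real.exp l) 1))
      (((hZ_meas i).const_mul l).exp.aestronglyMeasurable) ?_
    filter_upwards with ω
    simp only [Real.norm_eq_abs, abs_of_pos (Real.exp_pos _)]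
    simp only [hZ_def, hg_def]
    by_cases hx : X i ω ≤ s <;> simp [hx, le_max_left, le_max_right]
  have hint_sum : Integrable (fun ω => Real.exp (l * (∑ i, Z i) ω)) μ :=
    hZ_indep.integrable_exp_mul_sum hZ_meas hint_i
  have hchern := measure_ge_le_exp_mul_mgf (μ := μ) (X := ∑ i, Z i)
    (α * (n:ℝ)) hl_pos.le hint_sum
  rw [hZ_indep.mgf_sum hZ_meas] at hchern
  have hprod : ∏ i : Fin n, mgf (Z i) μ l ≤ Real.exp ((n:ℝ) * (l * q + l ^ 2 / 8)) := by
    calc ∏ i : Fin n, mgf (Z i) μ l = (1 - q + q * Real.exp l) ^ n := by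
          simp [hmgf_i]
      _ ≤ Real.exp (l * q + l ^ 2 / 8) ^ n := by
          apply pow_le_pow_left₀ ?_ (bernoulli_mgf_bound q hq0 hq1 l hl_pos.le)
          have := Real.exp_pos l
          nlinarith
      _ = Real.exp ((n:ℝ) * (l * q + l ^ 2 / 8)) := by
          rw [← Real.exp_nat_mul]
  have hfinal : Real.exp (-l * (α * n)) * ∏ i : Fin n, mgf (Z i) μ l ≤ β := by
    calc Real.exp (-l * (α * n)) * ∏ i : Fin n, mgf (Z i) μ l
        ≤ Real.exp (-l * (α * n)) * Real.exp ((n:ℝ) * (l * q + l ^ 2 / 8)) := by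
          apply mul_le_mul_of_nonneg_left hprod (Real.exp_pos _).le
      _ = Real.exp (-(2 * (n:ℝ) * p ^ 2)) := by
          rw [← Real.exp_add]
          congr 1
          simp only [hl_def, hp_def]
          ring
      _ ≤ β := by
          rw [← Real.exp_log hβ0]
          apply Real.exp_le_exp.mpr
          have h2p : (0:ℝ) < 2 * p ^ 2 := by positivity
          have hlog2 : Real.log (1 / β) = -Real.log β := by
            rw [one_div, Real.log_inv]
          rw [hlog2] at hn
          rw [ge_iff_le, div_mul_eq_mul_div, one_mul, div_le_iff₀ h2p] at hn
          nlinarith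
  calc μ {ω | α * (n:ℝ) ≤ (∑ i, Z i) ω}
      ≤ ENNReal.ofReal (Real.exp (-l * (α * n)) * ∏ i : Fin n, mgf (Z i) μ l) := by
        rw [← ENNReal.ofReal_toReal (measure_ne_top μ _)]
        exact ENNReal.ofReal_le_ofReal hchern
    _ ≤ ENNReal.ofReal β := ENNReal.ofReal_le_ofReal hfinal
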